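/- arXiv:1403.5556 — 4 statements merged into one kernel-verified Lean document; each statement's English description precedes it below -/
import Mathlib

section
/- Let Δ_t, g_t : {1,...,T} → ℝ≥0 be random sequences adapted to a filtration, with Δ_t² ≤ λ g_t almost surely for a constant λ ≥ 0, and E[Σ_{t=1}^T g_t] ≤ H for a constant H ≥ 0. Then E[Σ_{t=1}^T Δ_t] ≤ sqrt(λ H T). -/
open MeasureTheory

theorem general_regret_bound {Ω : Type*} [MeasurableSpace Ω]
    (μ : Measure Ω) [IsProbabilityMeasure μ] (T : ℕ) (lam H : ℝ)
    (hlam : 0 ≤ lam) (hH : 0 ≤ H)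
    (Δ g : ℕ → Ω → ℝ)
    (hΔ : ∀ t ω, 0 ≤ Δ t ω) (hg : ∀ t ω, 0 ≤ g t ω)
    (hΔint : ∀ t, Integrable (Δ t) μ) (hgint : ∀ t, Integrable (g t) μ)
    (hratio : ∀ᵐ ω ∂μ, ∀ t ∈ Finset.range T, (Δ t ω) ^ 2 ≤ lam * g t ω)
    (hinfo : ∫ ω, ∑ t ∈ Finset.range T, g t ω ∂μ ≤ H) :
    ∫ ω, ∑ t ∈ Finset.range T, Δ t ω ∂μ ≤ Real.sqrt (lam * H * T) := by
  set S : Ω → ℝ := fun ω => ∑ t ∈ Finset.range T, g t ω with hS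
  have hSnn : ∀ ω, 0 ≤ S ω := fun ω => Finset.sum_nonneg fun t _ => hg t ω
  have hSint : Integrable S μ := integrable_finset_sum _ fun t _ => hgint t
  -- pointwise bound
  have hpt : ∀ᵐ ω ∂μ, ∑ t ∈ Finset.range T, Δ t ω ≤
      Real.sqrt lam * Real.sqrt T * Real.sqrt (S ω) := by
    filter_upwards [hratio] with ω hω
    have h1 : ∑ t ∈ Finset.range T, Δ t ω ≤
        ∑ t ∈ Finset.range T, Real.sqrt lam * Real.sqrt (g t ω) := by
      refine Finset.sum_le_sum fun t ht => ?_
      have := hω t ht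
      calc Δ t ω = Real.sqrt ((Δ t ω) ^ 2) := by
            rw [Real.sqrt_sq (hΔ t ω)]
        _ ≤ Real.sqrt (lam * g t ω) := Real.sqrt_le_sqrt this
        _ = Real.sqrt lam * Real.sqrt (g t ω) := Real.sqrt_mul hlam _
    have h2 : ∑ t ∈ Finset.range T, Real.sqrt (g t ω) ≤
        Real.sqrt T * Real.sqrt (S ω) := by
      have hsq : (∑ t ∈ Finset.range T, Real.sqrt (g t ω)) ^ 2 ≤
          T * S ω := by
        have := sq_sum_le_card_mul_sum_sq (s := Finset.range T)
          (f := fun t => Real.sqrt (g t ω))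
        simpa [Real.sq_sqrt (hg _ ω)] using this
      have hnn : 0 ≤ ∑ t ∈ Finset.range T, Real.sqrt (g t ω) :=
        Finset.sum_nonneg fun t _ => Real.sqrt_nonneg _
      calc ∑ t ∈ Finset.range T, Real.sqrt (g t ω)
          = Real.sqrt ((∑ t ∈ Finset.range T, Real.sqrt (g t ω)) ^ 2) := by
            rw [Real.sqrt_sq hnn]
        _ ≤ Real.sqrt (T * S ω) := Real.sqrt_le_sqrt hsq
        _ = Real.sqrt T * Real.sqrt (S ω) := Real.sqrt_mul (Nat.cast_nonneg T) _
    calc ∑ t ∈ Finset.range T, Δ t ω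
        ≤ Real.sqrt lam * ∑ t ∈ Finset.range T, Real.sqrt (g t ω) := by
          rw [Finset.mul_sum]; exact h1
      _ ≤ Real.sqrt lam * (Real.sqrt T * Real.sqrt (S ω)) := by
          exact mul_le_mul_of_nonneg_left h2 (Real.sqrt_nonneg _)
      _ = Real.sqrt lam * Real.sqrt T * Real.sqrt (S ω) := by ring
  -- integrability of sqrt S
  have hmSm : AEStronglyMeasurable (fun ω => Real.sqrt (S ω)) μ :=
    Real.continuous_sqrt.comp_aestronglyMeasurable hSint.1
  have hsqrtint : Integrable (fun ω => Real.sqrt (S ω)) μ := by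
    refine Integrable.mono' (hSint.add (integrable_const 1)) hmSm ?_
    filter_upwards with ω
    simp only [Pi.add_apply]
    rw [Real.norm_of_nonneg (Real.sqrt_nonneg _)]
    rcases le_total (S ω) 1 with h | h
    · have : Real.sqrt (S ω) ≤ 1 := by
        rw [show (1:ℝ) = Real.sqrt 1 by simp]; exact Real.sqrt_le_sqrt h
      linarith [hSnn ω]
    · have : Real.sqrt (S ω) ≤ S ω := by
        nlinarith [Real.sq_sqrt (hSnn ω), Real.sqrt_nonneg (S ω)]
      linarith
  -- integrate pointwise bound
  have hint1 : ∫ ω, ∑ t ∈ Finset.range T, Δ t ω ∂μ ≤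
      Real.sqrt lam * Real.sqrt T * ∫ ω, Real.sqrt (S ω) ∂μ := by
    have := integral_mono_ae (integrable_finset_sum _ fun t _ => hΔint t)
      ((hsqrtint.const_mul _)) hpt
    simpa [integral_const_mul] using this
  -- Jensen / Cauchy-Schwarz: ∫ sqrt S ≤ sqrt (∫ S)
  have hmem2 : MemLp (fun ω => Real.sqrt (S ω)) 2 μ := by
    rw [memLp_two_iff_integrable_sq hmSm]
    refine hSint.congr (Filter.Eventually.of_forall fun ω => ?_)
    exact (Real.sq_sqrt (hSnn ω)).symm
  have hjensen : ∫ ω, Real.sqrt (S ω) ∂μ ≤ Real.sqrt (∫ ω, S ω ∂μ) := by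
    have hone : MemLp (fun _ : Ω => (1:ℝ)) 2 μ := memLp_const 1
    have := integral_mul_le_Lp_mul_Lq_of_nonneg (μ := μ)
      (Real.holderConjugate_iff.mpr ⟨by norm_num, by norm_num⟩ : (2:ℝ).HolderConjugate 2) (f := fun ω => Real.sqrt (S ω))
      (g := fun _ => (1:ℝ))
      (Filter.Eventually.of_forall fun ω => Real.sqrt_nonneg _)
      (Filter.Eventually.of_forall fun _ => zero_le_one)
      (by simpa [ENNReal.ofReal_ofNat] using hmem2)
      (by simpa [ENNReal.ofReal_ofNat] using hone)
    simp only [mul_one, one_pow] at this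
    have heq : ∫ ω, Real.sqrt (S ω) ^ (2:ℝ) ∂μ = ∫ ω, S ω ∂μ := by
      refine integral_congr_ae (Filter.Eventually.of_forall fun ω => ?_)
      show Real.sqrt (S ω) ^ (2:ℝ) = S ω
      rw [Real.rpow_two, Real.sq_sqrt (hSnn ω)]
    rw [heq] at this
    calc ∫ ω, Real.sqrt (S ω) ∂μ ≤ (∫ ω, S ω ∂μ) ^ ((1:ℝ)/2) * 1 := by
          simpa using this
      _ = Real.sqrt (∫ ω, S ω ∂μ) := by
          rw [mul_one, Real.sqrt_eq_rpow]
  have hSnonneg : 0 ≤ ∫ ω, S ω ∂μ := integral_nonneg hSnn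
  calc ∫ ω, ∑ t ∈ Finset.range T, Δ t ω ∂μ
      ≤ Real.sqrt lam * Real.sqrt T * ∫ ω, Real.sqrt (S ω) ∂μ := hint1
    _ ≤ Real.sqrt lam * Real.sqrt T * Real.sqrt (∫ ω, S ω ∂μ) := by
        exact mul_le_mul_of_nonneg_left hjensen
          (mul_nonneg (Real.sqrt_nonneg _) (Real.sqrt_nonneg _))
    _ ≤ Real.sqrt lam * Real.sqrt T * Real.sqrt H := by
        exact mul_le_mul_of_nonneg_left (Real.sqrt_le_sqrt hinfo)
          (mul_nonneg (Real.sqrt_nonneg _) (Real.sqrt_nonneg _))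
    _ = Real.sqrt (lam * H * T) := by
        rw [Real.sqrt_mul (mul_nonneg hlam hH), Real.sqrt_mul hlam]; ring
end

section
/- Let Δ_t, g_t, Ψ*_t be random sequences with Δ_t² = Ψ*_t g_t, Ψ*_t ≥ 0, g_t ≥ 0, and E[Σ_{t=1}^T g_t] ≤ H. Then E[Σ_{t=1}^T Δ_t] ≤ sqrt((1/T) E[Σ_{t=1}^T Ψ*_t] · H · T). -/
open MeasureTheory
open scoped ENNReal

theorem regret_bound_average_info_ratio {Ω : Type*} [MeasurableSpace Ω]
    (μ : Measure Ω) [IsProbabilityMeasure μ] (T : ℕ) (hT : 0 < T) (H : ℝ) (hH : 0 ≤ H)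
    (Δ g Ψ : ℕ → Ω → ℝ)
    (hΨ : ∀ t ω, 0 ≤ Ψ t ω) (hg : ∀ t ω, 0 ≤ g t ω)
    (hΔint : ∀ t, Integrable (Δ t) μ) (hgint : ∀ t, Integrable (g t) μ)
    (hΨint : ∀ t, Integrable (Ψ t) μ)
    (hratio : ∀ t ω, (Δ t ω) ^ 2 = Ψ t ω * g t ω)
    (hinfo : ∫ ω, ∑ t ∈ Finset.range T, g t ω ∂μ ≤ H) :
    ∫ ω, ∑ t ∈ Finset.range T, Δ t ω ∂μ ≤
      Real.sqrt ((1 / T) * (∫ ω, ∑ t ∈ Finset.range T, Ψ t ω ∂μ) * H * T) := by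
  set SΨ : Ω → ℝ := fun ω => ∑ t ∈ Finset.range T, Ψ t ω with hSΨ
  set Sg : Ω → ℝ := fun ω => ∑ t ∈ Finset.range T, g t ω with hSg
  have hSΨ_nonneg : ∀ ω, 0 ≤ SΨ ω := fun ω =>
    Finset.sum_nonneg fun t _ => hΨ t ω
  have hSg_nonneg : ∀ ω, 0 ≤ Sg ω := fun ω =>
    Finset.sum_nonneg fun t _ => hg t ω
  have hSΨint : Integrable SΨ μ := integrable_finset_sum _ fun t _ => hΨint t
  have hSgint : Integrable Sg μ := integrable_finset_sum _ fun t _ => hgint t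
  set F : Ω → ℝ := fun ω => Real.sqrt (SΨ ω) with hF
  set G : Ω → ℝ := fun ω => Real.sqrt (Sg ω) with hG
  have hFm : AEStronglyMeasurable F μ :=
    (Real.continuous_sqrt.comp_aestronglyMeasurable hSΨint.aestronglyMeasurable)
  have hGm : AEStronglyMeasurable G μ :=
    (Real.continuous_sqrt.comp_aestronglyMeasurable hSgint.aestronglyMeasurable)
  have hF2 : MemLp F 2 μ := by
    rw [memLp_two_iff_integrable_sq hFm]
    refine hSΨint.congr ?_
    filter_upwards with ω
    exact (Real.sq_sqrt (hSΨ_nonneg ω)).symm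
  have hG2 : MemLp G 2 μ := by
    rw [memLp_two_iff_integrable_sq hGm]
    refine hSgint.congr ?_
    filter_upwards with ω
    exact (Real.sq_sqrt (hSg_nonneg ω)).symm
  have hFGint : Integrable (fun ω => F ω * G ω) μ := by
    rw [← memLp_one_iff_integrable]
    have h1 : (1:ℝ≥0∞)/1 = 1/2 + 1/2 := by
      rw [ENNReal.div_add_div_same, one_div_one,
        (one_add_one_eq_two : (1:ℝ≥0∞) + 1 = 2)]
      exact (ENNReal.div_self two_ne_zero ENNReal.ofNat_ne_top).symm
    have := hG2.smul (E := ℝ) (𝕜 := ℝ) hF2 (r := 1)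
    exact this
  -- pointwise bound via discrete Cauchy-Schwarz
  have hpt : ∀ ω, ∑ t ∈ Finset.range T, Δ t ω ≤ F ω * G ω := by
    intro ω
    have h1 : ∑ t ∈ Finset.range T, Δ t ω ≤
        ∑ t ∈ Finset.range T, Real.sqrt (Ψ t ω) * Real.sqrt (g t ω) := by
      refine Finset.sum_le_sum fun t _ => ?_
      calc Δ t ω ≤ |Δ t ω| := le_abs_self _
        _ = Real.sqrt ((Δ t ω) ^ 2) := (Real.sqrt_sq_eq_abs _).symm
        _ = Real.sqrt (Ψ t ω * g t ω) := by rw [hratio]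
        _ = Real.sqrt (Ψ t ω) * Real.sqrt (g t ω) := Real.sqrt_mul (hΨ t ω) _
    have h2 : (∑ t ∈ Finset.range T, Real.sqrt (Ψ t ω) * Real.sqrt (g t ω)) ^ 2 ≤
        SΨ ω * Sg ω := by
      have := Finset.sum_mul_sq_le_sq_mul_sq (Finset.range T)
        (fun t => Real.sqrt (Ψ t ω)) (fun t => Real.sqrt (g t ω))
      simpa [Real.sq_sqrt (hΨ _ ω), Real.sq_sqrt (hg _ ω), hSΨ, hSg] using this
    have h3 : ∑ t ∈ Finset.range T, Real.sqrt (Ψ t ω) * Real.sqrt (g t ω) ≤ F ω * G ω := by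
      rw [hF, hG, ← Real.sqrt_mul (hSΨ_nonneg ω)]
      have hnn : 0 ≤ ∑ t ∈ Finset.range T, Real.sqrt (Ψ t ω) * Real.sqrt (g t ω) :=
        Finset.sum_nonneg fun t _ => mul_nonneg (Real.sqrt_nonneg _) (Real.sqrt_nonneg _)
      calc ∑ t ∈ Finset.range T, Real.sqrt (Ψ t ω) * Real.sqrt (g t ω)
          = Real.sqrt ((∑ t ∈ Finset.range T, Real.sqrt (Ψ t ω) * Real.sqrt (g t ω)) ^ 2) :=
            (Real.sqrt_sq hnn).symm
        _ ≤ Real.sqrt (SΨ ω * Sg ω) := Real.sqrt_le_sqrt h2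
    exact h1.trans h3
  have hintΔ : Integrable (fun ω => ∑ t ∈ Finset.range T, Δ t ω) μ :=
    integrable_finset_sum _ fun t _ => hΔint t
  have step1 : ∫ ω, ∑ t ∈ Finset.range T, Δ t ω ∂μ ≤ ∫ ω, F ω * G ω ∂μ :=
    integral_mono hintΔ hFGint hpt
  -- Cauchy-Schwarz for integrals
  have hCS : ∫ ω, F ω * G ω ∂μ ≤
      (∫ ω, F ω ^ (2:ℝ) ∂μ) ^ ((1:ℝ)/2) * (∫ ω, G ω ^ (2:ℝ) ∂μ) ^ ((1:ℝ)/2) := by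
    refine integral_mul_le_Lp_mul_Lq_of_nonneg ?_ ?_ ?_ ?_ ?_
    · constructor <;> norm_num
    · filter_upwards with ω; exact Real.sqrt_nonneg _
    · filter_upwards with ω; exact Real.sqrt_nonneg _
    · simpa using hF2
    · simpa using hG2
  have hIF : ∫ ω, F ω ^ (2:ℝ) ∂μ = ∫ ω, SΨ ω ∂μ := by
    refine integral_congr_ae (Filter.Eventually.of_forall fun ω => ?_)
    show F ω ^ (2:ℝ) = SΨ ω
    rw [show ((2:ℝ)) = ((2:ℕ):ℝ) by norm_num, Real.rpow_natCast,
      Real.sq_sqrt (hSΨ_nonneg ω)]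
  have hIG : ∫ ω, G ω ^ (2:ℝ) ∂μ = ∫ ω, Sg ω ∂μ := by
    refine integral_congr_ae (Filter.Eventually.of_forall fun ω => ?_)
    show G ω ^ (2:ℝ) = Sg ω
    rw [show ((2:ℝ)) = ((2:ℕ):ℝ) by norm_num, Real.rpow_natCast,
      Real.sq_sqrt (hSg_nonneg ω)]
  have hAΨ : 0 ≤ ∫ ω, SΨ ω ∂μ := integral_nonneg hSΨ_nonneg
  have step2 : (∫ ω, F ω ^ (2:ℝ) ∂μ) ^ ((1:ℝ)/2) * (∫ ω, G ω ^ (2:ℝ) ∂μ) ^ ((1:ℝ)/2) ≤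
      Real.sqrt ((∫ ω, SΨ ω ∂μ) * H) := by
    rw [hIF, hIG, ← Real.sqrt_eq_rpow, ← Real.sqrt_eq_rpow,
      ← Real.sqrt_mul hAΨ]
    exact Real.sqrt_le_sqrt (mul_le_mul_of_nonneg_left hinfo hAΨ)
  have hfin : Real.sqrt ((∫ ω, SΨ ω ∂μ) * H) =
      Real.sqrt ((1 / T) * (∫ ω, SΨ ω ∂μ) * H * T) := by
    congr 1
    have hT0 : (T:ℝ) ≠ 0 := Nat.cast_ne_zero.mpr hT.ne'
    first
    | (field_simp; ring)
    | field_simp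
  calc ∫ ω, ∑ t ∈ Finset.range T, Δ t ω ∂μ ≤ ∫ ω, F ω * G ω ∂μ := step1
    _ ≤ _ := hCS
    _ ≤ Real.sqrt ((∫ ω, SΨ ω ∂μ) * H) := step2
    _ = _ := by rw [hfin]
end

section
/- Let λ ≥ 0 and suppose sequences m_t ≥ 0 (minimal single-period regret), Ψ*_t ≤ λ, g_t ≥ 0 satisfy m_t ≤ sqrt(Ψ*_t · G_t) almost surely where G_t = max over actions of information gain, and E[Σ_{t=1}^T G_t] ≤ H. If additionally E[m_T] ≤ (1/T) E[Σ_{t=1}^T m_t], then E[m_T] ≤ sqrt(λ H / T). -/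
open MeasureTheory

lemma jensen_sqrt_aux {Ω : Type*} [MeasurableSpace Ω]
    (μ : Measure Ω) [IsProbabilityMeasure μ] (Z : Ω → ℝ)
    (hZint : Integrable Z μ) (hZ : ∀ ω, 0 ≤ Z ω) :
    ∫ ω, Real.sqrt (Z ω) ∂μ ≤ Real.sqrt (∫ ω, Z ω ∂μ) := by
  have hsm : AEStronglyMeasurable (fun ω => Real.sqrt (Z ω)) μ :=
    Real.continuous_sqrt.comp_aestronglyMeasurable hZint.aestronglyMeasurable
  have hsint : Integrable (fun ω => Real.sqrt (Z ω)) μ := by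
    refine Integrable.mono' ((integrable_const 1).add hZint |>.div_const 2) hsm ?_
    filter_upwards with ω
    rw [Real.norm_eq_abs, abs_of_nonneg (Real.sqrt_nonneg _)]
    simp only [Pi.add_apply]
    nlinarith [Real.sq_sqrt (hZ ω), Real.sqrt_nonneg (Z ω),
      sq_nonneg (Real.sqrt (Z ω) - 1)]
  set c := ∫ ω, Z ω ∂μ with hc
  have hc0 : 0 ≤ c := integral_nonneg hZ
  rcases eq_or_lt_of_le hc0 with h0 | hpos
  · have hZ0 : Z =ᵐ[μ] 0 := by
      rw [← integral_eq_zero_iff_of_nonneg hZ hZint]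
      exact h0.symm
    have hs0 : (fun ω => Real.sqrt (Z ω)) =ᵐ[μ] 0 := by
      filter_upwards [hZ0] with ω hω
      simp [hω]
    rw [integral_congr_ae hs0, ← h0]
    simp
  · have hkey : ∀ ω, Real.sqrt (Z ω) ≤ Z ω / (2 * Real.sqrt c) + Real.sqrt c / 2 := by
      intro ω
      have hsc : 0 < Real.sqrt c := Real.sqrt_pos.mpr hpos
      rw [div_add_div _ _ (by positivity) (two_ne_zero), le_div_iff₀ (by positivity)]
      nlinarith [sq_nonneg (Real.sqrt (Z ω) - Real.sqrt c), Real.sq_sqrt (hZ ω),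
        Real.sq_sqrt hc0, Real.sqrt_nonneg (Z ω)]
    have hle : ∫ ω, Real.sqrt (Z ω) ∂μ ≤
        ∫ ω, (Z ω / (2 * Real.sqrt c) + Real.sqrt c / 2) ∂μ := by
      refine integral_mono hsint ?_ hkey
      exact (hZint.div_const _).add (integrable_const _)
    have heval : ∫ ω, (Z ω / (2 * Real.sqrt c) + Real.sqrt c / 2) ∂μ = Real.sqrt c := by
      rw [integral_add (hZint.div_const _) (integrable_const _), integral_div,
        integral_const]
      simp only [measure_univ, ENNReal.toReal_one, probReal_univ, smul_eq_mul, one_mul]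
      have hsc : 0 < Real.sqrt c := Real.sqrt_pos.mpr hpos
      rw [← hc, div_add_div _ _ (by positivity) (two_ne_zero), div_eq_iff (by positivity)]
      nlinarith [Real.mul_self_sqrt hc0]
    linarith [hle, heval.le]

theorem pure_exploration_bound {Ω : Type*} [MeasurableSpace Ω]
    (μ : Measure Ω) [IsProbabilityMeasure μ] (T : ℕ) (hT : 0 < T)
    (lam H : ℝ) (hlam : 0 ≤ lam) (hH : 0 ≤ H)
    (m G Ψ : ℕ → Ω → ℝ)
    (hm : ∀ t ω, 0 ≤ m t ω) (hG : ∀ t ω, 0 ≤ G t ω)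
    (hΨlam : ∀ t ω, Ψ t ω ≤ lam)
    (hmint : ∀ t, Integrable (m t) μ) (hGint : ∀ t, Integrable (G t) μ)
    (hchain : ∀ᵐ ω ∂μ, ∀ t ∈ Finset.range T, m t ω ≤ Real.sqrt (Ψ t ω * G t ω))
    (hinfo : ∫ ω, ∑ t ∈ Finset.range T, G t ω ∂μ ≤ H)
    (hterm : ∫ ω, m T ω ∂μ ≤ (1 / T) * ∫ ω, ∑ t ∈ Finset.range T, m t ω ∂μ) :
    ∫ ω, m T ω ∂μ ≤ Real.sqrt (lam * H / T) := by
  set Z : Ω → ℝ := fun ω => lam * T * ∑ t ∈ Finset.range T, G t ω with hZdef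
  have hZnn : ∀ ω, 0 ≤ Z ω := by
    intro ω
    have : (0:ℝ) ≤ ∑ t ∈ Finset.range T, G t ω :=
      Finset.sum_nonneg fun t _ => hG t ω
    positivity
  have hZint : Integrable Z μ :=
    ((integrable_finset_sum _ fun t _ => hGint t).const_mul _)
  have hpt : ∀ᵐ ω ∂μ, ∑ t ∈ Finset.range T, m t ω ≤ Real.sqrt (Z ω) := by
    filter_upwards [hchain] with ω hω
    have h1 : ∑ t ∈ Finset.range T, m t ω ≤
        ∑ t ∈ Finset.range T, Real.sqrt lam * Real.sqrt (G t ω) := by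
      refine Finset.sum_le_sum fun t ht => ?_
      calc m t ω ≤ Real.sqrt (Ψ t ω * G t ω) := hω t ht
        _ ≤ Real.sqrt (lam * G t ω) := by
            apply Real.sqrt_le_sqrt
            exact mul_le_mul_of_nonneg_right (hΨlam t ω) (hG t ω)
        _ = Real.sqrt lam * Real.sqrt (G t ω) := Real.sqrt_mul hlam _
    rw [← Finset.mul_sum] at h1
    have h2 : ∑ t ∈ Finset.range T, Real.sqrt (G t ω) ≤
        Real.sqrt (T * ∑ t ∈ Finset.range T, G t ω) := by
      have hsq : (∑ t ∈ Finset.range T, Real.sqrt (G t ω))^2 ≤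
          (Finset.range T).card * ∑ t ∈ Finset.range T, (Real.sqrt (G t ω))^2 :=
        sq_sum_le_card_mul_sum_sq
      have hsq' : (∑ t ∈ Finset.range T, Real.sqrt (G t ω))^2 ≤
          (T:ℝ) * ∑ t ∈ Finset.range T, G t ω := by
        calc (∑ t ∈ Finset.range T, Real.sqrt (G t ω))^2
            ≤ (Finset.range T).card * ∑ t ∈ Finset.range T, (Real.sqrt (G t ω))^2 := hsq
          _ = (T:ℝ) * ∑ t ∈ Finset.range T, G t ω := by
              simp only [Finset.card_range]
              congr 1
              exact Finset.sum_congr rfl fun t _ => Real.sq_sqrt (hG t ω)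
      have h3 := Real.sqrt_le_sqrt hsq'
      rwa [Real.sqrt_sq (Finset.sum_nonneg fun t _ => Real.sqrt_nonneg _)] at h3
    calc ∑ t ∈ Finset.range T, m t ω
        ≤ Real.sqrt lam * ∑ t ∈ Finset.range T, Real.sqrt (G t ω) := h1
      _ ≤ Real.sqrt lam * Real.sqrt (T * ∑ t ∈ Finset.range T, G t ω) :=
          mul_le_mul_of_nonneg_left h2 (Real.sqrt_nonneg _)
      _ = Real.sqrt (Z ω) := by
          rw [← Real.sqrt_mul hlam, hZdef]
          ring_nf
  have hsqrtZint : Integrable (fun ω => Real.sqrt (Z ω)) μ := by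
    have hsm : AEStronglyMeasurable (fun ω => Real.sqrt (Z ω)) μ :=
      Real.continuous_sqrt.comp_aestronglyMeasurable hZint.aestronglyMeasurable
    refine Integrable.mono' ((integrable_const 1).add hZint |>.div_const 2) hsm ?_
    filter_upwards with ω
    rw [Real.norm_eq_abs, abs_of_nonneg (Real.sqrt_nonneg _)]
    simp only [Pi.add_apply]
    nlinarith [Real.sq_sqrt (hZnn ω), Real.sqrt_nonneg (Z ω),
      sq_nonneg (Real.sqrt (Z ω) - 1)]
  have hmean : ∫ ω, ∑ t ∈ Finset.range T, m t ω ∂μ ≤ ∫ ω, Real.sqrt (Z ω) ∂μ :=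
    integral_mono_ae (integrable_finset_sum _ fun t _ => hmint t) hsqrtZint hpt
  have hjensen : ∫ ω, Real.sqrt (Z ω) ∂μ ≤ Real.sqrt (∫ ω, Z ω ∂μ) :=
    jensen_sqrt_aux μ Z hZint hZnn
  have hZval : ∫ ω, Z ω ∂μ ≤ lam * T * H := by
    rw [hZdef]
    simp only
    rw [integral_const_mul]
    exact mul_le_mul_of_nonneg_left hinfo (by positivity)
  have hfinal : Real.sqrt (∫ ω, Z ω ∂μ) ≤ Real.sqrt (lam * T * H) :=
    Real.sqrt_le_sqrt hZval
  have hTpos : (0:ℝ) < T := by exact_mod_cast hT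
  calc ∫ ω, m T ω ∂μ
      ≤ (1 / T) * ∫ ω, ∑ t ∈ Finset.range T, m t ω ∂μ := hterm
    _ ≤ (1 / T) * Real.sqrt (lam * T * H) := by
        apply mul_le_mul_of_nonneg_left _ (by positivity)
        exact le_trans hmean (le_trans hjensen hfinal)
    _ = Real.sqrt (lam * H / T) := by
        rw [show lam * H / (T:ℝ) = (lam * T * H) / (T:ℝ)^2 by field_simp,
          Real.sqrt_div (by positivity : (0:ℝ) ≤ lam * T * H),
          Real.sqrt_sq hTpos.le, one_div, inv_mul_eq_div]
end

section
/- In the sparse linear bandit example with d = 2^m actions: for Thompson sampling, the information ratio satisfies Ψ₁(π^TS) = ((d−1)²/d²) / (log(d)/d + ((d−1)/d)·log(d/(d−1))), and this quantity is asymptotically equivalent to d/log(d) as d → ∞ (their ratio tends to 1). -/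
open Filter

theorem ts_info_ratio_asymptotics :
    Tendsto (fun d : ℕ =>
        ((((d : ℝ) - 1) ^ 2 / (d : ℝ) ^ 2) /
            (Real.log d / d + (((d : ℝ) - 1) / d) * Real.log ((d : ℝ) / ((d : ℝ) - 1)))) /
          ((d : ℝ) / Real.log d))
      atTop (nhds 1) := by
  -- limit of (d-1)/d
  have ha : Tendsto (fun d : ℕ => ((d : ℝ) - 1) / d) atTop (nhds 1) := by
    have h0 : Tendsto (fun d : ℕ => 1 - 1 / (d : ℝ)) atTop (nhds 1) := by
      have := (tendsto_one_div_atTop_nhds_zero_nat (𝕜 := ℝ)).const_sub 1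
      simpa using this
    apply h0.congr'
    filter_upwards [eventually_ge_atTop 1] with d hd
    have hd0 : (d : ℝ) ≠ 0 := by positivity
    field_simp
  -- limit of d * log (d/(d-1))
  have hb : Tendsto (fun d : ℕ => (d : ℝ) * Real.log ((d : ℝ) / ((d : ℝ) - 1)))
      atTop (nhds 1) := by
    have h1 : Tendsto (fun x : ℝ => x * Real.log (1 + (-1) / x)) atTop (nhds (-1)) :=
      Real.tendsto_mul_log_one_add_div_atTop (-1)
    have h2 := (h1.comp tendsto_natCast_atTop_atTop (α := ℕ)).neg
    rw [neg_neg] at h2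
    apply h2.congr'
    filter_upwards [eventually_ge_atTop 2] with d hd
    have hd2 : (2 : ℝ) ≤ (d : ℝ) := by exact_mod_cast hd
    have hd0 : (d : ℝ) ≠ 0 := by linarith
    have hd1 : (d : ℝ) - 1 > 0 := by linarith
    have : (1 : ℝ) + (-1) / d = ((d : ℝ) / ((d : ℝ) - 1))⁻¹ := by
      field_simp; ring
    simp only [Function.comp]
    rw [this, Real.log_inv]
    ring
  have hlog : Tendsto (fun d : ℕ => Real.log d) atTop atTop :=
    Real.tendsto_log_atTop.comp tendsto_natCast_atTop_atTop
  have hc : Tendsto (fun d : ℕ =>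
      ((d : ℝ) * Real.log ((d : ℝ) / ((d : ℝ) - 1)) * (((d : ℝ) - 1) / d)) / Real.log d)
      atTop (nhds 0) := (hb.mul ha).div_atTop hlog
  have hden : Tendsto (fun d : ℕ =>
      1 + ((d : ℝ) * Real.log ((d : ℝ) / ((d : ℝ) - 1)) * (((d : ℝ) - 1) / d)) / Real.log d)
      atTop (nhds 1) := by
    have := (tendsto_const_nhds (x := (1 : ℝ)) (f := atTop (α := ℕ))).add hc
    simpa using this
  have hmain : Tendsto (fun d : ℕ =>
      (((d : ℝ) - 1) / d) ^ 2 /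
        (1 + ((d : ℝ) * Real.log ((d : ℝ) / ((d : ℝ) - 1)) * (((d : ℝ) - 1) / d)) / Real.log d))
      atTop (nhds 1) := by
    have := (ha.pow 2).div hden one_ne_zero
    simpa [Pi.div_def] using this
  apply hmain.congr'
  filter_upwards [eventually_ge_atTop 2] with d hd
  have hd2 : (2 : ℝ) ≤ (d : ℝ) := by exact_mod_cast hd
  have hd0 : (0 : ℝ) < d := by linarith
  have hd1 : (0 : ℝ) < (d : ℝ) - 1 := by linarith
  have hL : 0 < Real.log d := Real.log_pos (by linarith)
  have hg : 0 < Real.log ((d : ℝ) / ((d : ℝ) - 1)) := by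
    apply Real.log_pos
    rw [lt_div_iff₀ hd1]; linarith
  have hden0 : Real.log d / d + (((d : ℝ) - 1) / d) * Real.log ((d : ℝ) / ((d : ℝ) - 1)) > 0 := by
    positivity
  field_simp
end
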